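/- Let p be a prime with p > 2. Let G_p^× be the graph whose vertex set is the set of nonzero triples (a,b,c) ∈ (ZMod p)³ with a² + b² + c² = a*b*c, with an edge joining v and V_i(v) for each of the three Vieta involutions V_i. Let G^× be the graph whose vertex set is the set of nonzero triples (a,b,c) of nonnegative integers with a² + b² + c² = a*b*c, with edges likewise given by the V_i. Assume (Markoff's theorem) that G^× is connected. Then G_p^× is connected if and only if every triple (a,b,c) ∈ (ZMod p)³ with a² + b² + c² = a*b*c is the componentwise reduction modulo p of a nonnegative integer triple (A,B,C) with A² + B² + C² = A*B*C. -/

import Mathlib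

/-- The Markoff equation `a² + b² + c² = a·b·c` for a triple over a commutative ring. -/
def IsMarkoff {R : Type*} [CommRing R] (v : R × R × R) : Prop :=
  v.1 ^ 2 + v.2.1 ^ 2 + v.2.2 ^ 2 = v.1 * v.2.1 * v.2.2

/-- The three Markoff Vieta involutions. -/
def vieta {R : Type*} [CommRing R] : Fin 3 → R × R × R → R × R × R
  | 0 => fun v => (v.2.1 * v.2.2 - v.1, v.2.1, v.2.2)
  | 1 => fun v => (v.1, v.1 * v.2.2 - v.2.1, v.2.2)
  | 2 => fun v => (v.1, v.2.1, v.1 * v.2.1 - v.2.2)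

/-- The Markoff graph `𝒢ₚ^×` modulo `p`: vertices are the nonzero solutions of the Markoff
equation over `ZMod p`, with an edge joining `v` and `Vᵢ v` for each Vieta involution. -/
def markoffGraphMod (p : ℕ) :
    SimpleGraph {v : ZMod p × ZMod p × ZMod p // IsMarkoff v ∧ v ≠ 0} where
  Adj v w := v ≠ w ∧ ∃ i : Fin 3, w.val = vieta i v.val ∨ v.val = vieta i w.val
  symm := ⟨fun v w ⟨h, i, hi⟩ => ⟨h.symm, i, hi.symm⟩⟩
  loopless := ⟨fun v h => h.1 rfl⟩

/-- The Markoff graph `𝒢^×` over the nonnegative integers: vertices are the nonzero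
nonnegative integer solutions of the Markoff equation, with edges given by the Vieta
involutions. -/
def markoffGraphInt :
    SimpleGraph {v : ℤ × ℤ × ℤ // IsMarkoff v ∧ v ≠ 0 ∧ 0 ≤ v.1 ∧ 0 ≤ v.2.1 ∧ 0 ≤ v.2.2} where
  Adj v w := v ≠ w ∧ ∃ i : Fin 3, w.val = vieta i v.val ∨ v.val = vieta i w.val
  symm := ⟨fun v w ⟨h, i, hi⟩ => ⟨h.symm, i, hi.symm⟩⟩
  loopless := ⟨fun v h => h.1 rfl⟩

lemma vieta_inv {R : Type*} [CommRing R] (i : Fin 3) (v : R × R × R) :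
    vieta i (vieta i v) = v := by
  obtain ⟨a, b, c⟩ := v
  fin_cases i <;> simp [vieta]

lemma isMarkoff_vieta {R : Type*} [CommRing R] (i : Fin 3) {v : R × R × R}
    (h : IsMarkoff v) : IsMarkoff (vieta i v) := by
  obtain ⟨a, b, c⟩ := v
  unfold IsMarkoff at h ⊢
  fin_cases i <;> simp only [vieta] <;> linear_combination h

def red (p : ℕ) (w : ℤ × ℤ × ℤ) : ZMod p × ZMod p × ZMod p :=
  ((w.1 : ZMod p), (w.2.1 : ZMod p), (w.2.2 : ZMod p))

lemma red_vieta (p : ℕ) (i : Fin 3) (w : ℤ × ℤ × ℤ) :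
    red p (vieta i w) = vieta i (red p w) := by
  obtain ⟨a, b, c⟩ := w
  fin_cases i <;> simp [vieta, red]

lemma red_isMarkoff {p : ℕ} {w : ℤ × ℤ × ℤ} (h : IsMarkoff w) : IsMarkoff (red p w) := by
  obtain ⟨a, b, c⟩ := w
  unfold IsMarkoff at *
  have := congrArg (fun n : ℤ => (n : ZMod p)) h
  push_cast at this
  exact this

lemma vieta_zero {R : Type*} [CommRing R] (i : Fin 3) : vieta i (0 : R × R × R) = 0 := by
  fin_cases i <;> simp [vieta, Prod.ext_iff]

lemma sq_add_sq_eq_zero {x y : ℤ} (h : x ^ 2 + y ^ 2 = 0) : x = 0 ∧ y = 0 := by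
  have hx : x ^ 2 = 0 := le_antisymm (by nlinarith [sq_nonneg y]) (sq_nonneg x)
  have hy : y ^ 2 = 0 := le_antisymm (by nlinarith [sq_nonneg x]) (sq_nonneg y)
  exact ⟨pow_eq_zero_iff (by norm_num) |>.mp hx, pow_eq_zero_iff (by norm_num) |>.mp hy⟩

lemma markoff_pos {v : ℤ × ℤ × ℤ} (h : IsMarkoff v) (h0 : v ≠ 0)
    (h1 : 0 ≤ v.1) (h2 : 0 ≤ v.2.1) (h3 : 0 ≤ v.2.2) :
    0 < v.1 ∧ 0 < v.2.1 ∧ 0 < v.2.2 := by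
  obtain ⟨a, b, c⟩ := v
  unfold IsMarkoff at h
  simp only at h h1 h2 h3 ⊢
  have key : a ≠ 0 ∧ b ≠ 0 ∧ c ≠ 0 := by
    refine ⟨fun hz => ?_, fun hz => ?_, fun hz => ?_⟩
    · subst hz
      obtain ⟨hb, hc⟩ := sq_add_sq_eq_zero (x := b) (y := c) (by linear_combination h)
      exact h0 (by simp [hb, hc, Prod.ext_iff])
    · subst hz
      obtain ⟨ha, hc⟩ := sq_add_sq_eq_zero (x := a) (y := c) (by linear_combination h)
      exact h0 (by simp [ha, hc, Prod.ext_iff])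
    · subst hz
      obtain ⟨ha, hb⟩ := sq_add_sq_eq_zero (x := a) (y := b) (by linear_combination h)
      exact h0 (by simp [ha, hb, Prod.ext_iff])
  exact ⟨lt_of_le_of_ne h1 (Ne.symm key.1), lt_of_le_of_ne h2 (Ne.symm key.2.1),
    lt_of_le_of_ne h3 (Ne.symm key.2.2)⟩

lemma vieta_pos (i : Fin 3) {v : ℤ × ℤ × ℤ} (h : IsMarkoff v)
    (h1 : 0 < v.1) (h2 : 0 < v.2.1) (h3 : 0 < v.2.2) :
    0 < (vieta i v).1 ∧ 0 < (vieta i v).2.1 ∧ 0 < (vieta i v).2.2 := by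
  obtain ⟨a, b, c⟩ := v
  unfold IsMarkoff at h
  simp only at h h1 h2 h3
  fin_cases i <;> simp only [vieta] <;> refine ⟨?_, ?_, ?_⟩ <;>
    nlinarith [sq_nonneg a, sq_nonneg b, sq_nonneg c, mul_pos h1 h2, mul_pos h2 h3,
      mul_pos h1 h3]

lemma mod3_only_zero (v : ZMod 3 × ZMod 3 × ZMod 3) (h : IsMarkoff v) : v = 0 := by
  have : ∀ w : ZMod 3 × ZMod 3 × ZMod 3,
      w.1 ^ 2 + w.2.1 ^ 2 + w.2.2 ^ 2 = w.1 * w.2.1 * w.2.2 → w = 0 := by decide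
  exact this v h

lemma adj_normalize {R : Type*} [CommRing R] {v w : R × R × R} {i : Fin 3}
    (h : w = vieta i v ∨ v = vieta i w) : w = vieta i v := by
  rcases h with h | h
  · exact h
  · rw [h, vieta_inv]

lemma lift_walk (p : ℕ) :
    ∀ {a b : {v : ZMod p × ZMod p × ZMod p // IsMarkoff v ∧ v ≠ 0}},
    (markoffGraphMod p).Walk a b →
    ∀ W : ℤ × ℤ × ℤ, IsMarkoff W → 0 < W.1 → 0 < W.2.1 → 0 < W.2.2 → red p W = a.val →
    ∃ W' : ℤ × ℤ × ℤ, IsMarkoff W' ∧ 0 < W'.1 ∧ 0 < W'.2.1 ∧ 0 < W'.2.2 ∧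
      red p W' = b.val := by
  intro a b w
  induction w with
  | nil => exact fun W h h1 h2 h3 hr => ⟨W, h, h1, h2, h3, hr⟩
  | cons h w ih =>
    intro W hM h1 h2 h3 hr
    obtain ⟨hne, i, hi⟩ := h
    have hc := adj_normalize hi
    have hpos := vieta_pos i hM h1 h2 h3
    exact ih (vieta i W) (isMarkoff_vieta i hM) hpos.1 hpos.2.1 hpos.2.2
      (by rw [red_vieta, hr, hc])

lemma walk_reach (p : ℕ) :
    ∀ {A B : {v : ℤ × ℤ × ℤ // IsMarkoff v ∧ v ≠ 0 ∧ 0 ≤ v.1 ∧ 0 ≤ v.2.1 ∧ 0 ≤ v.2.2}},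
    markoffGraphInt.Walk A B → ∀ hA : red p A.val ≠ 0,
    ∃ hB : red p B.val ≠ 0,
      (markoffGraphMod p).Reachable ⟨red p A.val, red_isMarkoff A.prop.1, hA⟩
        ⟨red p B.val, red_isMarkoff B.prop.1, hB⟩ := by
  intro A B w
  induction w with
  | nil => exact fun hA => ⟨hA, SimpleGraph.Reachable.refl _⟩
  | @cons A C B h w ih =>
    intro hA
    obtain ⟨hne, i, hi⟩ := h
    have hc : C.val = vieta i A.val := adj_normalize hi
    have hredc : red p C.val = vieta i (red p A.val) := by rw [hc, red_vieta]
    have hC : red p C.val ≠ 0 := by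
      intro hz
      apply hA
      have : vieta i (vieta i (red p A.val)) = vieta i 0 := by rw [← hredc, hz]
      rwa [vieta_inv, vieta_zero] at this
    obtain ⟨hB, hreach⟩ := ih hC
    refine ⟨hB, SimpleGraph.Reachable.trans ?_ hreach⟩
    by_cases heq : red p A.val = red p C.val
    · have hsub : (⟨red p A.val, red_isMarkoff A.prop.1, hA⟩ :
          {v : ZMod p × ZMod p × ZMod p // IsMarkoff v ∧ v ≠ 0}) =
          ⟨red p C.val, red_isMarkoff C.prop.1, hC⟩ := Subtype.ext heq
      rw [hsub]
    · exact SimpleGraph.Adj.reachable ⟨fun hh => heq (congrArg Subtype.val hh), i, Or.inl hredc⟩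

theorem markoffGraphMod_connected_iff_lift (p : ℕ) [Fact p.Prime] (hp : 2 < p)
    (hconn : markoffGraphInt.Preconnected) :
    (markoffGraphMod p).Preconnected ↔
      ∀ v : ZMod p × ZMod p × ZMod p, IsMarkoff v →
        ∃ w : ℤ × ℤ × ℤ, IsMarkoff w ∧ 0 ≤ w.1 ∧ 0 ≤ w.2.1 ∧ 0 ≤ w.2.2 ∧
          ((w.1 : ZMod p), (w.2.1 : ZMod p), (w.2.2 : ZMod p)) = v := by
  constructor
  · intro hco v hv
    by_cases hv0 : v = 0
    · refine ⟨0, by unfold IsMarkoff; simp, le_refl 0, le_refl 0, le_refl 0, ?_⟩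
      subst hv0
      simp [Prod.ext_iff]
    · by_cases hp3 : p = 3
      · subst hp3; exact absurd (mod3_only_zero v hv) hv0
      · have h3 : ((3 : ℤ) : ZMod p) ≠ 0 := by
          intro hz
          rw [ZMod.intCast_zmod_eq_zero_iff_dvd] at hz
          have hdvd := hz
          have hdvd' : p ∣ 3 := by exact_mod_cast hdvd
          have := Nat.le_of_dvd (by norm_num) hdvd'
          omega
        set B : ℤ × ℤ × ℤ := (3, 3, 3) with hB
        have hBM : IsMarkoff B := by unfold IsMarkoff; norm_num
        have hBr : red p B ≠ 0 := fun hz => h3 (congrArg Prod.fst hz)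
        obtain ⟨w⟩ := hco ⟨red p B, red_isMarkoff hBM, hBr⟩ ⟨v, hv, hv0⟩
        obtain ⟨W, hM, h1, h2, h3', hr⟩ :=
          lift_walk p w B hBM (by norm_num) (by norm_num) (by norm_num) rfl
        exact ⟨W, hM, h1.le, h2.le, h3'.le, hr⟩
  · intro hlift u v
    obtain ⟨U, hUM, hU1, hU2, hU3, hUr⟩ := hlift u.val u.prop.1
    obtain ⟨V, hVM, hV1, hV2, hV3, hVr⟩ := hlift v.val v.prop.1
    have hUr' : red p U = u.val := hUr
    have hVr' : red p V = v.val := hVr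
    have hUne : U ≠ 0 := by
      intro hz
      apply u.prop.2
      rw [← hUr', hz]
      simp [red, Prod.ext_iff]
    have hVne : V ≠ 0 := by
      intro hz
      apply v.prop.2
      rw [← hVr', hz]
      simp [red, Prod.ext_iff]
    obtain ⟨w⟩ := hconn ⟨U, hUM, hUne, hU1, hU2, hU3⟩ ⟨V, hVM, hVne, hV1, hV2, hV3⟩
    have hA : red p U ≠ 0 := by rw [hUr']; exact u.prop.2
    obtain ⟨hB, hreach⟩ := walk_reach p w hA
    have e1 : (⟨red p U, red_isMarkoff hUM, hA⟩ :
        {v : ZMod p × ZMod p × ZMod p // IsMarkoff v ∧ v ≠ 0}) = u := Subtype.ext hUr'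
    have e2 : (⟨red p V, red_isMarkoff hVM, hB⟩ :
        {v : ZMod p × ZMod p × ZMod p // IsMarkoff v ∧ v ≠ 0}) = v := Subtype.ext hVr'
    rw [e1, e2] at hreach
    exact hreach
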